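/- Let ν be a finite point measure on ℝ≥0, z₀ ∈ ℝ≥0, and m ∈ ℕ. Then (ν+δ_{z₀})^{⊗m,↓} − ν^{⊗m,↓} = Σ_{i=1}^m ν^{⊗(m−1),↓} ⊗_i δ_{z₀}, where ν^{⊗m,↓} is the m-fold falling factorial (sampling without replacement) measure and ⊗_i denotes insertion of δ_{z₀} in the i-th coordinate. -/

import Mathlib

open scoped Classical
open Finset

/-- The `m`-fold falling factorial (sampling without replacement) measure
`ν^{⊗m,↓}` of a finite point measure `ν` on `ℝ≥0`, encoded as the multiset of
ordered `m`-samples without replacement from the multiset of atoms. -/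
noncomputable def factorialSample : ℕ → Multiset NNReal → Multiset (List NNReal)
  | 0, _ => {[]}
  | m + 1, s => s.bind fun z => (factorialSample m (s.erase z)).map fun l => z :: l

lemma bind_finset_sum {α β ι : Type*} (s : Multiset α) (t : Finset ι)
    (f : α → ι → Multiset β) :
    (s.bind fun a => ∑ i ∈ t, f a i) = ∑ i ∈ t, s.bind (fun a => f a i) := by
  classical
  induction t using Finset.induction with
  | empty => simp [Multiset.bind_zero]
  | insert a s h ih => simp [Finset.sum_insert h, Multiset.bind_add, ih]

lemma map_finset_sum' {α β ι : Type*} (t : Finset ι) (f : ι → Multiset α) (g : α → β) :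
    (∑ i ∈ t, f i).map g = ∑ i ∈ t, (f i).map g := by
  classical
  induction t using Finset.induction with
  | empty => simp
  | insert a s h ih => simp [Finset.sum_insert h, ih]

lemma erase_cons_of_mem {α : Type*} [DecidableEq α] {z : α} {ν : Multiset α} (z₀ : α)
    (h : z ∈ ν) : (z₀ ::ₘ ν).erase z = z₀ ::ₘ ν.erase z := by
  by_cases hz : z = z₀
  · subst hz
    rw [Multiset.erase_cons_head, Multiset.cons_erase h]
  · rw [Multiset.erase_cons_tail ν fun h => hz h.symm]

/-- Addition rule for factorial measures:
`(ν+δ_{z₀})^{⊗m,↓} − ν^{⊗m,↓} = Σ_{i=1}^m ν^{⊗(m−1),↓} ⊗_i δ_{z₀}`, where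
`⊗_i` inserts the Dirac mass at `z₀` in the `i`-th coordinate. -/
theorem factorialSample_add_singleton (ν : Multiset NNReal) (z₀ : NNReal) (m : ℕ) :
    factorialSample m (z₀ ::ₘ ν)
      = factorialSample m ν
        + ∑ i ∈ Finset.range m,
            (factorialSample (m - 1) ν).map (fun l => l.insertIdx i z₀) := by
  induction m generalizing ν with
  | zero => simp [factorialSample]
  | succ m ih =>
    have step : factorialSample (m + 1) (z₀ ::ₘ ν)
        = (factorialSample m ν).map (fun l => z₀ :: l)
          + ν.bind fun z => (factorialSample m (z₀ ::ₘ ν.erase z)).map fun l => z :: l := by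
      rw [show factorialSample (m + 1) (z₀ ::ₘ ν)
          = (z₀ ::ₘ ν).bind fun z =>
              (factorialSample m ((z₀ ::ₘ ν).erase z)).map fun l => z :: l from rfl,
        Multiset.cons_bind, Multiset.erase_cons_head]
      congr 1
      refine Multiset.bind_congr fun z hz => ?_
      rw [erase_cons_of_mem z₀ hz]
    rw [step]
    have expand : (ν.bind fun z => (factorialSample m (z₀ ::ₘ ν.erase z)).map fun l => z :: l)
        = factorialSample (m + 1) ν
          + ∑ i ∈ Finset.range m, ν.bind fun z =>
              (factorialSample (m - 1) (ν.erase z)).map fun l => z :: l.insertIdx i z₀ := by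
      have : (ν.bind fun z => (factorialSample m (z₀ ::ₘ ν.erase z)).map fun l => z :: l)
          = ν.bind fun z =>
              ((factorialSample m (ν.erase z)).map fun l => z :: l)
              + ∑ i ∈ Finset.range m,
                  (factorialSample (m - 1) (ν.erase z)).map fun l => z :: l.insertIdx i z₀ := by
        refine Multiset.bind_congr fun z _ => ?_
        rw [ih (ν.erase z), Multiset.map_add, map_finset_sum']
        simp [Multiset.map_map, Function.comp]
      rw [this, Multiset.bind_add, bind_finset_sum]
      rfl
    rw [expand]
    have key : ∀ i ∈ Finset.range m,
        (ν.bind fun z =>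
            (factorialSample (m - 1) (ν.erase z)).map fun l => z :: l.insertIdx i z₀)
        = (factorialSample m ν).map fun l => l.insertIdx (i + 1) z₀ := by
      intro i hi
      simp only [Finset.mem_range] at hi
      obtain ⟨k, rfl⟩ : ∃ k, m = k + 1 := ⟨m - 1, by omega⟩
      rw [show factorialSample (k + 1) ν
          = ν.bind fun z => (factorialSample k (ν.erase z)).map fun l => z :: l from rfl,
        Multiset.map_bind]
      refine Multiset.bind_congr fun z _ => ?_
      simp [Multiset.map_map, Function.comp_def, List.insertIdx_succ_cons]
    rw [Finset.sum_congr rfl key, Finset.sum_range_succ']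
    simp only [Nat.add_sub_cancel, List.insertIdx_zero]
    abel
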